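/- Suppose u : ℝ → ℝ is continuous and satisfies u(-x) = u(x + T) for all x ∈ ℝ, for some T > 0. Then ∫₀ᵀ dt₁ ∫₀^{t₁} dt₂ sinh(u(t₁) - u(t₂)) = 0. -/

import Mathlib

open Real intervalIntegral

/-- If `u` is continuous and satisfies `u(-x) = u(x + T)`, then the second-order
Magnus integral `∫₀ᵀ ∫₀^{t₁} sinh(u t₁ - u t₂) dt₂ dt₁` vanishes. -/
theorem second_order_magnus_vanishes (T : ℝ) (hT : 0 < T)
    (u : ℝ → ℝ) (hu : Continuous u) (hsymm : ∀ x : ℝ, u (-x) = u (x + T)) :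
    (∫ t₁ in (0:ℝ)..T, ∫ t₂ in (0:ℝ)..t₁, Real.sinh (u t₁ - u t₂)) = 0 := by
  -- symmetry: u (T - t) = u t
  have hsym : ∀ t : ℝ, u (T - t) = u t := by
    intro t
    have := hsymm (t - T)
    simpa [neg_sub, sub_add_cancel] using this
  set S : ℝ → ℝ := fun t => ∫ s in (0:ℝ)..t, Real.sinh (u s) with hS
  set C : ℝ → ℝ := fun t => ∫ s in (0:ℝ)..t, Real.cosh (u s) with hC
  have hcontS : Continuous fun s => Real.sinh (u s) := Real.continuous_sinh.comp hu
  have hcontC : Continuous fun s => Real.cosh (u s) := Real.continuous_cosh.comp hu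
  have hintS : ∀ a b : ℝ, IntervalIntegrable (fun s => Real.sinh (u s)) MeasureTheory.volume a b :=
    fun a b => hcontS.intervalIntegrable a b
  have hintC : ∀ a b : ℝ, IntervalIntegrable (fun s => Real.cosh (u s)) MeasureTheory.volume a b :=
    fun a b => hcontC.intervalIntegrable a b
  -- derivatives of the primitives
  have hSderiv : ∀ t : ℝ, HasDerivAt S (Real.sinh (u t)) t := fun t =>
    intervalIntegral.integral_hasDerivAt_right (hintS 0 t)
      (hcontS.stronglyMeasurableAtFilter _ _) hcontS.continuousAt
  have hCderiv : ∀ t : ℝ, HasDerivAt C (Real.cosh (u t)) t := fun t =>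
    intervalIntegral.integral_hasDerivAt_right (hintC 0 t)
      (hcontC.stronglyMeasurableAtFilter _ _) hcontC.continuousAt
  have hScont : Continuous S := continuous_iff_continuousAt.2 fun t => (hSderiv t).continuousAt
  have hCcont : Continuous C := continuous_iff_continuousAt.2 fun t => (hCderiv t).continuousAt
  -- inner integral splits
  have hinner : ∀ t₁ : ℝ, (∫ t₂ in (0:ℝ)..t₁, Real.sinh (u t₁ - u t₂))
      = Real.sinh (u t₁) * C t₁ - Real.cosh (u t₁) * S t₁ := by
    intro t₁
    have h : (∫ t₂ in (0:ℝ)..t₁, Real.sinh (u t₁ - u t₂))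
        = ∫ t₂ in (0:ℝ)..t₁,
            (Real.sinh (u t₁) * Real.cosh (u t₂) - Real.cosh (u t₁) * Real.sinh (u t₂)) := by
      congr 1; ext t₂; rw [Real.sinh_sub]
    rw [h, intervalIntegral.integral_sub ((hintC 0 t₁).const_mul _)
      ((hintS 0 t₁).const_mul _), intervalIntegral.integral_const_mul,
      intervalIntegral.integral_const_mul]
  -- S (T - t) = S T - S t
  have hSsym : ∀ t : ℝ, S (T - t) = S T - S t := by
    intro t
    have h1 : S t = ∫ x in (T - t)..T, Real.sinh (u x) := by
      have h0 : S t = ∫ s in (0:ℝ)..t, Real.sinh (u (T - s)) := by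
        simp only [hS]; congr 1; ext s; rw [hsym]
      rw [h0, intervalIntegral.integral_comp_sub_left (fun x => Real.sinh (u x)) T, sub_zero]
    have h2 : S (T - t) + ∫ x in (T - t)..T, Real.sinh (u x) = S T :=
      intervalIntegral.integral_add_adjacent_intervals (hintS 0 (T - t)) (hintS (T - t) T)
    rw [← h1] at h2; linarith
  set A : ℝ := ∫ t in (0:ℝ)..T, Real.cosh (u t) * S t with hA
  -- A satisfies 2A = C T * S T
  have hA2 : 2 * A = C T * S T := by
    have hsub : (∫ t in (0:ℝ)..T, Real.cosh (u (T - t)) * S (T - t)) = A := by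
      have := intervalIntegral.integral_comp_sub_left (fun x => Real.cosh (u x) * S x) T
        (a := 0) (b := T)
      simpa using this
    have hlhs : (∫ t in (0:ℝ)..T, Real.cosh (u (T - t)) * S (T - t))
        = ∫ t in (0:ℝ)..T, (Real.cosh (u t) * S T - Real.cosh (u t) * S t) := by
      congr 1; ext t; rw [hsym, hSsym, mul_sub]
    have hint1 : IntervalIntegrable (fun t => Real.cosh (u t) * S T) MeasureTheory.volume 0 T :=
      (hcontC.mul continuous_const).intervalIntegrable 0 T
    have hint2 : IntervalIntegrable (fun t => Real.cosh (u t) * S t) MeasureTheory.volume 0 T :=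
      (hcontC.mul hScont).intervalIntegrable 0 T
    have key : A = C T * S T - A := by
      calc A = ∫ t in (0:ℝ)..T, Real.cosh (u (T - t)) * S (T - t) := hsub.symm
        _ = ∫ t in (0:ℝ)..T, (Real.cosh (u t) * S T - Real.cosh (u t) * S t) := hlhs
        _ = (∫ t in (0:ℝ)..T, Real.cosh (u t) * S T) - A :=
            intervalIntegral.integral_sub hint1 hint2
        _ = C T * S T - A := by rw [intervalIntegral.integral_mul_const]
    linarith
  -- integration by parts: ∫ C * sinh(u) = C T * S T - A
  have hB : (∫ t in (0:ℝ)..T, Real.sinh (u t) * C t) = C T * S T - A := by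
    have hparts := intervalIntegral.integral_mul_deriv_eq_deriv_mul_of_hasDerivAt
      (u := C) (v := S) (u' := fun t => Real.cosh (u t)) (v' := fun t => Real.sinh (u t))
      (a := 0) (b := T) hCcont.continuousOn hScont.continuousOn
      (fun x _ => hCderiv x) (fun x _ => hSderiv x) (hintC 0 T) (hintS 0 T)
    have hS0 : S 0 = 0 := by simp [hS]
    have hcomm : (∫ t in (0:ℝ)..T, Real.sinh (u t) * C t)
        = ∫ t in (0:ℝ)..T, C t * Real.sinh (u t) := by
      congr 1; ext t; ring
    rw [hcomm, hparts, hS0]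
    simp only [mul_zero, sub_zero, ← hA]
  -- conclude
  have hfinal : (∫ t₁ in (0:ℝ)..T, ∫ t₂ in (0:ℝ)..t₁, Real.sinh (u t₁ - u t₂))
      = (∫ t in (0:ℝ)..T, Real.sinh (u t) * C t) - A := by
    have h : (∫ t₁ in (0:ℝ)..T, ∫ t₂ in (0:ℝ)..t₁, Real.sinh (u t₁ - u t₂))
        = ∫ t₁ in (0:ℝ)..T, (Real.sinh (u t₁) * C t₁ - Real.cosh (u t₁) * S t₁) := by
      congr 1; ext t₁; exact hinner t₁
    rw [h, intervalIntegral.integral_sub (show IntervalIntegrable (fun t => Real.sinh (u t) * C t) MeasureTheory.volume 0 T from (hcontS.mul hCcont).intervalIntegrable 0 T)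
      (show IntervalIntegrable (fun t => Real.cosh (u t) * S t) MeasureTheory.volume 0 T from (hcontC.mul hScont).intervalIntegrable 0 T)]
  rw [hfinal, hB]; linarith
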